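/- Let P be a partial latin square of order n, T a set of cells of P, and f ∈ T a filled cell. Then the Hall Inequality Σ_σ α(σ,T) ≥ |T| holds if and only if the Hall Inequality Σ_σ α(σ,T∖{f}) ≥ |T∖{f}| holds. -/

import Mathlib

open scoped Classical

section PLS

variable {n : ℕ}

/-- A partial latin square of order `n`: an `n × n` array of optional symbols,
no symbol occurring twice in any row or column. -/
def IsPLS (n : ℕ) (P : Fin n → Fin n → Option (Fin n)) : Prop :=
  (∀ i j j' σ, P i j = some σ → P i j' = some σ → j = j') ∧
  (∀ i i' j σ, P i j = some σ → P i' j = some σ → i = i')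

/-- `σ` is missing from row `i`. -/
def MissingRow (P : Fin n → Fin n → Option (Fin n)) (σ i : Fin n) : Prop :=
  ∀ j, P i j ≠ some σ

/-- `σ` is missing from column `j`. -/
def MissingCol (P : Fin n → Fin n → Option (Fin n)) (σ j : Fin n) : Prop :=
  ∀ i, P i j ≠ some σ

/-- A cell supports `σ` if it contains `σ`, or is empty and `σ` is missing from
its row and column. -/
def Supports (P : Fin n → Fin n → Option (Fin n)) (σ : Fin n) (c : Fin n × Fin n) : Prop :=
  P c.1 c.2 = some σ ∨ (P c.1 c.2 = none ∧ MissingRow P σ c.1 ∧ MissingCol P σ c.2)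

/-- A set of cells is independent if no two share a row or a column. -/
def IndepCells (S : Finset (Fin n × Fin n)) : Prop :=
  ∀ c ∈ S, ∀ c' ∈ S, c ≠ c' → c.1 ≠ c'.1 ∧ c.2 ≠ c'.2

/-- `alpha P σ T` : max size of an independent subset of `T` all of whose cells support `σ`. -/
noncomputable def alpha (P : Fin n → Fin n → Option (Fin n)) (σ : Fin n)
    (T : Finset (Fin n × Fin n)) : ℕ :=
  (T.powerset.filter (fun S => IndepCells S ∧ ∀ c ∈ S, Supports P σ c)).sup Finset.card

/-- Hall's Condition: every set of cells satisfies the Hall Inequality. -/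
def HallCond (n : ℕ) (P : Fin n → Fin n → Option (Fin n)) : Prop :=
  ∀ T : Finset (Fin n × Fin n), T.card ≤ ∑ σ : Fin n, alpha P σ T

/-- A latin square of order `n`. -/
def IsLatin (n : ℕ) (L : Fin n → Fin n → Fin n) : Prop :=
  (∀ i, Function.Injective (L i)) ∧ (∀ j, Function.Injective fun i => L i j)

/-- `L` is a completion of `P`. -/
def Completes (n : ℕ) (P : Fin n → Fin n → Option (Fin n)) (L : Fin n → Fin n → Fin n) : Prop :=
  IsLatin n L ∧ ∀ i j σ, P i j = some σ → L i j = σ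

end PLS


lemma alpha_mono {n : ℕ} (P : Fin n → Fin n → Option (Fin n)) (σ : Fin n)
    {T T' : Finset (Fin n × Fin n)} (h : T' ⊆ T) : alpha P σ T' ≤ alpha P σ T := by
  apply Finset.sup_le
  intro S hS
  simp only [Finset.mem_filter, Finset.mem_powerset] at hS
  exact Finset.le_sup (by
    simp only [Finset.mem_filter, Finset.mem_powerset]
    exact ⟨hS.1.trans h, hS.2⟩)

theorem stmt1 (n : ℕ) (P : Fin n → Fin n → Option (Fin n)) (hP : IsPLS n P)
    (T : Finset (Fin n × Fin n)) (f : Fin n × Fin n) (hf : f ∈ T)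
    (hfill : P f.1 f.2 ≠ none) :
    (T.card ≤ ∑ σ : Fin n, alpha P σ T) ↔
      ((T.erase f).card ≤ ∑ σ : Fin n, alpha P σ (T.erase f)) := by
  obtain ⟨τ, hτ⟩ := Option.ne_none_iff_exists'.mp hfill
  -- upper bound: alpha T ≤ alpha (T.erase f) + ite
  have hA : ∀ σ : Fin n, alpha P σ T ≤ alpha P σ (T.erase f) + (if σ = τ then 1 else 0) := by
    intro σ
    apply Finset.sup_le
    intro S hS
    simp only [Finset.mem_filter, Finset.mem_powerset] at hS
    obtain ⟨hST, hind, hsupp⟩ := hS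
    by_cases hστ : σ = τ
    · subst hστ
      simp only [if_pos rfl]
      have hmem : S.erase f ∈ (T.erase f).powerset.filter
          (fun S => IndepCells S ∧ ∀ c ∈ S, Supports P σ c) := by
        simp only [Finset.mem_filter, Finset.mem_powerset]
        refine ⟨Finset.erase_subset_erase f hST, ?_, ?_⟩
        · intro c hc c' hc' hne
          exact hind c (Finset.mem_of_mem_erase hc) c' (Finset.mem_of_mem_erase hc') hne
        · intro c hc; exact hsupp c (Finset.mem_of_mem_erase hc)
      have h1 : S.card ≤ (S.erase f).card + 1 := by
        have : S ⊆ insert f (S.erase f) := by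
          intro x hx
          by_cases hx' : x = f
          · simp [hx']
          · exact Finset.mem_insert_of_mem (Finset.mem_erase.mpr ⟨hx', hx⟩)
        calc S.card ≤ (insert f (S.erase f)).card := Finset.card_le_card this
          _ ≤ (S.erase f).card + 1 := Finset.card_insert_le _ _
      exact h1.trans (Nat.add_le_add_right (Finset.le_sup hmem) 1)
    · simp only [if_neg hστ, Nat.add_zero]
      have hfS : f ∉ S := by
        intro hfS
        rcases hsupp f hfS with h | h
        · rw [hτ] at h; exact hστ (Option.some.inj h).symm
        · rw [hτ] at h; exact Option.some_ne_none _ h.1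
      refine Finset.le_sup ?_
      simp only [Finset.mem_filter, Finset.mem_powerset]
      refine ⟨?_, hind, hsupp⟩
      intro x hx
      exact Finset.mem_erase.mpr ⟨fun h => hfS (h ▸ hx), hST hx⟩
  -- lower bound
  have hB : ∀ σ : Fin n, alpha P σ (T.erase f) + (if σ = τ then 1 else 0) ≤ alpha P σ T := by
    intro σ
    by_cases hστ : σ = τ
    · subst hστ
      simp only [if_pos rfl]
      -- choose S attaining the sup
      have hne : ((T.erase f).powerset.filter
          (fun S => IndepCells S ∧ ∀ c ∈ S, Supports P σ c)).Nonempty := by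
        refine ⟨∅, ?_⟩
        simp [IndepCells]
      obtain ⟨S, hSmem, hScard⟩ := Finset.exists_mem_eq_sup _ hne Finset.card
      simp only [Finset.mem_filter, Finset.mem_powerset] at hSmem
      obtain ⟨hST, hind, hsupp⟩ := hSmem
      have hfS : f ∉ S := fun h => (Finset.mem_erase.mp (hST h)).1 rfl
      -- no cell of S shares row or column with f
      have hrow : ∀ c ∈ S, c.1 ≠ f.1 ∧ c.2 ≠ f.2 := by
        intro c hc
        have hcsupp := hsupp c hc
        constructor
        · intro h
          rcases hcsupp with h' | h'
          · have := hP.1 c.1 c.2 f.2 σ h' (h ▸ hτ)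
            exact hfS (by rwa [show c = f from Prod.ext h this] at hc)
          · exact h'.2.1 f.2 (h ▸ hτ)
        · intro h
          rcases hcsupp with h' | h'
          · have := hP.2 c.1 f.1 c.2 σ h' (h ▸ hτ)
            exact hfS (by rwa [show c = f from Prod.ext this h] at hc)
          · exact h'.2.2 f.1 (h ▸ hτ)
      have hmem : insert f S ∈ T.powerset.filter
          (fun S => IndepCells S ∧ ∀ c ∈ S, Supports P σ c) := by
        simp only [Finset.mem_filter, Finset.mem_powerset]
        refine ⟨?_, ?_, ?_⟩
        · intro x hx
          rcases Finset.mem_insert.mp hx with h | h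
          · exact h ▸ hf
          · exact Finset.mem_of_mem_erase (hST h)
        · intro c hc c' hc' hne
          rcases Finset.mem_insert.mp hc with h | h <;>
            rcases Finset.mem_insert.mp hc' with h' | h'
          · exact absurd (h.trans h'.symm) hne
          · have := hrow c' h'
            exact ⟨h ▸ this.1.symm, h ▸ this.2.symm⟩
          · have := hrow c h
            exact ⟨h' ▸ this.1, h' ▸ this.2⟩
          · exact hind c h c' h' hne
        · intro c hc
          rcases Finset.mem_insert.mp hc with h | h
          · exact h ▸ Or.inl hτ
          · exact hsupp c h
      have h2 : (insert f S).card ≤ alpha P σ T := Finset.le_sup (f := Finset.card) hmem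
      rw [Finset.card_insert_of_notMem hfS] at h2
      have h3 : alpha P σ (T.erase f) = S.card := hScard
      simp only [if_true]
      omega
    · simp only [if_neg hστ, Nat.add_zero]
      exact alpha_mono P σ (Finset.erase_subset f T)
  have hsumA : ∑ σ : Fin n, alpha P σ T ≤ (∑ σ : Fin n, alpha P σ (T.erase f)) + 1 := by
    calc ∑ σ : Fin n, alpha P σ T
        ≤ ∑ σ : Fin n, (alpha P σ (T.erase f) + (if σ = τ then 1 else 0)) :=
          Finset.sum_le_sum fun σ _ => hA σ
      _ = (∑ σ : Fin n, alpha P σ (T.erase f)) + 1 := by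
          rw [Finset.sum_add_distrib]; simp
  have hsumB : (∑ σ : Fin n, alpha P σ (T.erase f)) + 1 ≤ ∑ σ : Fin n, alpha P σ T := by
    calc (∑ σ : Fin n, alpha P σ (T.erase f)) + 1
        = ∑ σ : Fin n, (alpha P σ (T.erase f) + (if σ = τ then 1 else 0)) := by
          rw [Finset.sum_add_distrib]; simp
      _ ≤ ∑ σ : Fin n, alpha P σ T := Finset.sum_le_sum fun σ _ => hB σ
  have hcard : (T.erase f).card = T.card - 1 := Finset.card_erase_of_mem hf
  have hpos : 1 ≤ T.card := Finset.card_pos.mpr ⟨f, hf⟩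
  omega
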